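/- Let κ = 2τ and let G be a κ-deletion-minimal graph with respect to total coloring. Then no edge uv with deg_G(u) = deg_G(v) = τ is contained in a triangle of G. -/

import Mathlib

open SimpleGraph

variable {V : Type*}

/-- The degree of a vertex, defined via the cardinality of its neighbor set. -/
noncomputable def deg (G : SimpleGraph V) (v : V) : ℕ := (G.neighborSet v).ncard

/-- The maximum degree of a graph. -/
noncomputable def maxDeg (G : SimpleGraph V) : ℕ := ⨆ v, deg G v

/-- `fv` colors the vertices and `fe` colors the edges; together they form a total
coloring: adjacent vertices get distinct colors, distinct edges sharing a vertex get
distinct colors, and a vertex gets a color distinct from every edge incident to it. -/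
def IsTotalColoring (G : SimpleGraph V) {α : Type*} (fv : V → α) (fe : Sym2 V → α) : Prop :=
  (∀ u v : V, G.Adj u v → fv u ≠ fv v) ∧
  (∀ e₁ e₂ : Sym2 V, e₁ ∈ G.edgeSet → e₂ ∈ G.edgeSet → e₁ ≠ e₂ →
      (∃ w : V, w ∈ e₁ ∧ w ∈ e₂) → fe e₁ ≠ fe e₂) ∧
  (∀ (v : V) (e : Sym2 V), e ∈ G.edgeSet → v ∈ e → fv v ≠ fe e)

/-- `G` has a total coloring with `n` colors. -/
def HasTotalColoring (G : SimpleGraph V) (n : ℕ) : Prop :=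
  ∃ (fv : V → Fin n) (fe : Sym2 V → Fin n), IsTotalColoring G fv fe

/-- The total chromatic number of `G`. -/
noncomputable def totalChromaticNumber (G : SimpleGraph V) : ℕ :=
  sInf {n | HasTotalColoring G n}

/-- A `κ`-deletion-minimal graph: maximum degree at most `κ - 1`, total chromatic
number greater than `κ`, but every proper subgraph has total chromatic number at most `κ`. -/
def DeletionMinimal (κ : ℕ) (G : SimpleGraph V) : Prop :=
  (∀ v : V, deg G v ≤ κ - 1) ∧ κ < totalChromaticNumber G ∧
  ∀ H : SimpleGraph V, H < G → totalChromaticNumber H ≤ κ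

/-! ### Auxiliary lemmas -/

lemma htc_mono {G : SimpleGraph V} {n m : ℕ} (h : HasTotalColoring G n) (hnm : n ≤ m) :
    HasTotalColoring G m := by
  obtain ⟨fv, fe, h1, h2, h3⟩ := h
  refine ⟨fun v => Fin.castLE hnm (fv v), fun e => Fin.castLE hnm (fe e), ?_, ?_, ?_⟩
  · exact fun a b hab hc => h1 a b hab (Fin.castLE_injective hnm hc)
  · exact fun e1 e2 he1 he2 hne hsh hc => h2 e1 e2 he1 he2 hne hsh (Fin.castLE_injective hnm hc)
  · exact fun x e he hx hc => h3 x e he hx (Fin.castLE_injective hnm hc)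

lemma htc_exists [Fintype V] (G : SimpleGraph V) : ∃ n, HasTotalColoring G n := by
  classical
  let e := Fintype.equivFin (V ⊕ Sym2 V)
  refine ⟨Fintype.card (V ⊕ Sym2 V), fun v => e (.inl v), fun s => e (.inr s), ?_, ?_, ?_⟩
  · intro a b hab hc; exact hab.ne (by simpa using e.injective hc)
  · intro e1 e2 _ _ hne _ hc; exact hne (by simpa using e.injective hc)
  · intro x s _ _ hc; simpa using e.injective hc

lemma edge_decomp {G : SimpleGraph V} {e : Sym2 V} {u : V} (he : e ∈ G.edgeSet) (hu : u ∈ e) :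
    ∃ x, G.Adj u x ∧ e = s(u, x) := by
  induction e with
  | h a b =>
    rw [Sym2.mem_iff] at hu
    rcases hu with rfl | rfl
    · exact ⟨b, he, rfl⟩
    · exact ⟨a, (G.mem_edgeSet.mp he).symm, Sym2.eq_swap.symm⟩

lemma recolor_vertex [DecidableEq V] {α : Type*} {H : SimpleGraph V} {fv : V → α}
    {fe : Sym2 V → α}
    (hcol : IsTotalColoring H fv fe) (u : V) (c : α)
    (hadj : ∀ b, H.Adj u b → c ≠ fv b)
    (hinc : ∀ e ∈ H.edgeSet, u ∈ e → c ≠ fe e) :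
    IsTotalColoring H (Function.update fv u c) fe := by
  obtain ⟨h1, h2, h3⟩ := hcol
  refine ⟨?_, h2, ?_⟩
  · intro a b hab
    by_cases ha : a = u <;> by_cases hb : b = u
    · exact absurd hab (by rw [ha, hb]; exact H.loopless.irrefl u)
    · subst ha; rw [Function.update_self, Function.update_of_ne hb]
      exact hadj b hab
    · subst hb; rw [Function.update_self, Function.update_of_ne ha]
      exact fun h => hadj a hab.symm h.symm
    · rw [Function.update_of_ne ha, Function.update_of_ne hb]
      exact h1 a b hab
  · intro x e he hx
    by_cases hxu : x = u
    · subst hxu; rw [Function.update_self]; exact hinc e he hx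
    · rw [Function.update_of_ne hxu]; exact h3 x e he hx

lemma extend_coloring [DecidableEq V] {G : SimpleGraph V} {u v : V} (huv : G.Adj u v)
    {α : Type*} [DecidableEq α] {fv : V → α} {fe : Sym2 V → α}
    (hcol : IsTotalColoring (G.deleteEdges {s(u, v)}) fv fe)
    (c : α) (hcu : c ≠ fv u) (hcv : c ≠ fv v) (huvc : fv u ≠ fv v)
    (hEu : ∀ x, G.Adj u x → x ≠ v → c ≠ fe s(u, x))
    (hEv : ∀ y, G.Adj v y → y ≠ u → c ≠ fe s(v, y)) :
    IsTotalColoring G fv (Function.update fe s(u, v) c) := by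
  set H := G.deleteEdges {s(u, v)} with hH
  obtain ⟨h1, h2, h3⟩ := hcol
  have hedge : ∀ e : Sym2 V, e ∈ G.edgeSet → e ≠ s(u, v) → e ∈ H.edgeSet := by
    intro e he hne
    rw [hH, edgeSet_deleteEdges]
    exact ⟨he, by simpa using hne⟩
  refine ⟨?_, ?_, ?_⟩
  · intro a b hab
    by_cases he : s(a, b) = s(u, v)
    · rw [Sym2.eq_iff] at he
      rcases he with ⟨rfl, rfl⟩ | ⟨rfl, rfl⟩
      · exact huvc
      · exact huvc.symm
    · exact h1 a b (by rw [hH, deleteEdges_adj]; exact ⟨hab, by simpa using he⟩)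
  · intro e1 e2 he1 he2 hne hsh
    obtain ⟨z, hz1, hz2⟩ := hsh
    by_cases h1' : e1 = s(u, v) <;> by_cases h2' : e2 = s(u, v)
    · exact absurd (h1'.trans h2'.symm) hne
    · subst h1'
      rw [Function.update_self, Function.update_of_ne h2']
      rw [Sym2.mem_iff] at hz1
      rcases hz1 with rfl | rfl
      · obtain ⟨x, hx, rfl⟩ := edge_decomp he2 hz2
        have hxv : x ≠ v := fun h => h2' (by rw [h])
        exact hEu x hx hxv
      · obtain ⟨y, hy, rfl⟩ := edge_decomp he2 hz2
        have hyu : y ≠ u := by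
          rintro rfl
          exact h2' (by rw [Sym2.eq_swap])
        exact hEv y hy hyu
    · subst h2'
      rw [Function.update_self, Function.update_of_ne h1']
      rw [Sym2.mem_iff] at hz2
      rcases hz2 with rfl | rfl
      · obtain ⟨x, hx, rfl⟩ := edge_decomp he1 hz1
        have hxv : x ≠ v := fun h => h1' (by rw [h])
        exact (hEu x hx hxv).symm
      · obtain ⟨y, hy, rfl⟩ := edge_decomp he1 hz1
        have hyu : y ≠ u := by
          rintro rfl
          exact h1' (by rw [Sym2.eq_swap])
        exact (hEv y hy hyu).symm
    · rw [Function.update_of_ne h1', Function.update_of_ne h2']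
      exact h2 e1 e2 (hedge e1 he1 h1') (hedge e2 he2 h2') hne ⟨z, hz1, hz2⟩
  · intro x e he hx
    by_cases h' : e = s(u, v)
    · subst h'
      rw [Function.update_self]
      rw [Sym2.mem_iff] at hx
      rcases hx with rfl | rfl
      · exact hcu.symm
      · exact hcv.symm
    · rw [Function.update_of_ne h']
      exact h3 x e (hedge e he h') hx

lemma deg_eq [Fintype V] {G : SimpleGraph V} [DecidableRel G.Adj] (u : V) :
    deg G u = G.degree u := by
  rw [deg, ← Nat.card_coe_set_eq, Nat.card_eq_fintype_card, card_neighborSet_eq_degree]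

lemma del_adj {G : SimpleGraph V} {u v : V} (huv : u ≠ v) (a : V) :
    (G.deleteEdges {s(u, v)}).Adj u a ↔ G.Adj u a ∧ a ≠ v := by
  rw [deleteEdges_adj]
  constructor
  · rintro ⟨h, hne⟩
    refine ⟨h, ?_⟩
    rintro rfl
    exact hne rfl
  · rintro ⟨h, hav⟩
    refine ⟨h, ?_⟩
    intro hmem
    rw [Set.mem_singleton_iff, Sym2.eq_iff] at hmem
    rcases hmem with ⟨-, rfl⟩ | ⟨rfl, -⟩
    · exact hav rfl
    · exact huv rfl

/-- The core recoloring argument: if the color of `w` coincides with the color of an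
edge `ux` with `x ≠ v`, then we can recolor `u` and extend the coloring to all of `G`. -/
lemma core_lemma [Fintype V] [DecidableEq V] {G : SimpleGraph V} [DecidableRel G.Adj] {τ : ℕ}
    {u v w : V}
    (huv : G.Adj u v) (hu : deg G u = τ) (huw : G.Adj u w) (hwv : w ≠ v)
    {fv : V → Fin (2 * τ)} {fe : Sym2 V → Fin (2 * τ)}
    (hcol : IsTotalColoring (G.deleteEdges {s(u, v)}) fv fe)
    (huvne : fv u ≠ fv v)
    (x : V) (hx : G.Adj u x) (hxv : x ≠ v) (hfwx : fv w = fe s(u, x))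
    (hfu_u : ∀ x', G.Adj u x' → x' ≠ v → fv u ≠ fe s(u, x'))
    (hfu_v : ∀ y', G.Adj v y' → y' ≠ u → fv u ≠ fe s(v, y')) :
    HasTotalColoring G (2 * τ) := by
  have huvne' : u ≠ v := huv.ne
  have hdegu : (G.neighborFinset u).card = τ := by
    rw [← hu]; exact (deg_eq u).symm
  set Su := (G.neighborFinset u).erase v with hSu
  have hSumem : ∀ z, z ∈ Su ↔ G.Adj u z ∧ z ≠ v := by
    intro z; rw [hSu, Finset.mem_erase, mem_neighborFinset]; tauto
  have hSucard : Su.card = τ - 1 := by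
    rw [hSu, Finset.card_erase_of_mem (by simpa using huv), hdegu]
  set A := Su.image fv with hA
  set B := Su.image (fun z => fe s(u, z)) with hB
  have hwA : fv w ∈ A := Finset.mem_image_of_mem _ ((hSumem w).mpr ⟨huw, hwv⟩)
  have hwB : fv w ∈ B := by
    rw [hfwx]; exact Finset.mem_image_of_mem _ ((hSumem x).mpr ⟨hx, hxv⟩)
  set T := insert (fv u) (insert (fv v) (A ∪ B)) with hT
  have hTcard : T.card < 2 * τ := by
    have h1 : (A ∪ B).card + (A ∩ B).card = A.card + B.card :=
      Finset.card_union_add_card_inter A B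
    have h2 : A.card ≤ τ - 1 := le_trans Finset.card_image_le (le_of_eq hSucard)
    have h3 : B.card ≤ τ - 1 := le_trans Finset.card_image_le (le_of_eq hSucard)
    have h4 : 1 ≤ (A ∩ B).card :=
      Finset.card_pos.mpr ⟨fv w, Finset.mem_inter.mpr ⟨hwA, hwB⟩⟩
    have h5 : T.card ≤ (A ∪ B).card + 2 := by
      rw [hT]
      calc (insert (fv u) (insert (fv v) (A ∪ B))).card
          ≤ (insert (fv v) (A ∪ B)).card + 1 := Finset.card_insert_le _ _
        _ ≤ (A ∪ B).card + 2 := by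
            have := Finset.card_insert_le (fv v) (A ∪ B); omega
    have hτ1 : 1 ≤ Su.card := Finset.card_pos.mpr ⟨w, (hSumem w).mpr ⟨huw, hwv⟩⟩
    omega
  obtain ⟨c', hc'⟩ : ∃ c', c' ∉ T := by
    by_contra hcon
    push_neg at hcon
    rw [Finset.eq_univ_iff_forall.mpr hcon, Finset.card_univ, Fintype.card_fin] at hTcard
    omega
  have hTu : fv u ∈ T := by simp [hT]
  have hTv : fv v ∈ T := by simp [hT]
  have hTA : ∀ a ∈ A, a ∈ T := by intro a ha; simp [hT]; tauto
  have hTB : ∀ a ∈ B, a ∈ T := by intro a ha; simp [hT]; tauto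
  have hcol' : IsTotalColoring (G.deleteEdges {s(u, v)}) (Function.update fv u c') fe := by
    refine recolor_vertex hcol u c' ?_ ?_
    · intro b hb
      rw [del_adj huvne'] at hb
      intro hcb
      exact hc' (by rw [hcb]; exact hTA _ (Finset.mem_image_of_mem fv ((hSumem b).mpr hb)))
    · intro e he hue
      obtain ⟨z, hz, rfl⟩ := edge_decomp he hue
      rw [del_adj huvne'] at hz
      intro hce
      exact hc' (by rw [hce]; exact hTB _ (Finset.mem_image_of_mem _ ((hSumem z).mpr hz)))
  refine ⟨Function.update fv u c', Function.update fe s(u, v) (fv u),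
    extend_coloring huv hcol' (fv u) ?_ ?_ ?_ ?_ ?_⟩
  · rw [Function.update_self]
    exact fun h => hc' (by rw [← h]; exact hTu)
  · rw [Function.update_of_ne (Ne.symm huvne')]
    exact huvne
  · rw [Function.update_self, Function.update_of_ne (Ne.symm huvne')]
    exact fun h => hc' (by rw [h]; exact hTv)
  · exact hfu_u
  · exact hfu_v

/-- for κ = 2τ, in a κ-deletion-minimal graph no edge `uv` with
`deg u = deg v = τ` is contained in a triangle. -/
theorem stmt_9 {V : Type*} [Fintype V] (τ κ : ℕ) (hκ : κ = 2 * τ)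
    (G : SimpleGraph V) (hG : DeletionMinimal κ G) (u v w : V)
    (huv : G.Adj u v) (hu : deg G u = τ) (hv : deg G v = τ)
    (huw : G.Adj u w) (hvw : G.Adj v w) : False := by
  classical
  subst hκ
  have huvne' : u ≠ v := huv.ne
  have hwu : w ≠ u := huw.ne'
  have hwv : w ≠ v := hvw.ne'
  have hlt : G.deleteEdges {s(u, v)} < G := by
    refine lt_of_le_of_ne (deleteEdges_le _) ?_
    intro h
    have hadj : (G.deleteEdges {s(u, v)}).Adj u v := by rw [h]; exact huv
    rw [del_adj huvne'] at hadj
    exact hadj.2 rfl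
  have hκcol : HasTotalColoring (G.deleteEdges {s(u, v)}) (2 * τ) := by
    obtain ⟨n, hn⟩ := htc_exists (G.deleteEdges {s(u, v)})
    have hmem := Nat.sInf_mem (⟨n, hn⟩ : Set.Nonempty {n | HasTotalColoring (G.deleteEdges {s(u, v)}) n})
    exact htc_mono hmem (hG.2.2 _ hlt)
  obtain ⟨fv0, fe0, hcol0⟩ := hκcol
  have hfinal : ∀ (fv' : V → Fin (2 * τ)) (fe' : Sym2 V → Fin (2 * τ)),
      IsTotalColoring G fv' fe' → False := by
    intro fv' fe' h
    have h1 : totalChromaticNumber G ≤ 2 * τ := Nat.sInf_le ⟨fv', fe', h⟩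
    have h2 := hG.2.1
    omega
  have hdegu : (G.neighborFinset u).card = τ := by rw [← hu]; exact (deg_eq u).symm
  have hdegv : (G.neighborFinset v).card = τ := by rw [← hv]; exact (deg_eq v).symm
  have hτ1 : 1 ≤ τ := by
    have hmem : v ∈ G.neighborFinset u := by simpa using huv
    have := Finset.card_pos.mpr ⟨v, hmem⟩
    omega
  set Su := (G.neighborFinset u).erase v with hSu
  set Sv := (G.neighborFinset v).erase u with hSv
  have hSumem : ∀ z, z ∈ Su ↔ G.Adj u z ∧ z ≠ v := by
    intro z; rw [hSu, Finset.mem_erase, mem_neighborFinset]; tauto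
  have hSvmem : ∀ z, z ∈ Sv ↔ G.Adj v z ∧ z ≠ u := by
    intro z; rw [hSv, Finset.mem_erase, mem_neighborFinset]; tauto
  have hSucard : Su.card = τ - 1 := by
    rw [hSu, Finset.card_erase_of_mem (by simpa using huv), hdegu]
  have hSvcard : Sv.card = τ - 1 := by
    rw [hSv, Finset.card_erase_of_mem (by simpa using huv.symm), hdegv]
  have hadju : ∀ a, (G.deleteEdges {s(u, v)}).Adj u a ↔ G.Adj u a ∧ a ≠ v :=
    fun a => del_adj huvne' a
  have hadjv : ∀ a, (G.deleteEdges {s(u, v)}).Adj v a ↔ G.Adj v a ∧ a ≠ u := by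
    intro a
    rw [show ({s(u, v)} : Set (Sym2 V)) = {s(v, u)} from by rw [Sym2.eq_swap]]
    exact del_adj (Ne.symm huvne') a
  -- Step 1: recolor v so that u and v get different vertex colors
  set T0 := insert (fv0 u) ((Sv.image fv0) ∪ (Sv.image (fun z => fe0 s(v, z)))) with hT0
  have hT0card : T0.card < 2 * τ := by
    have h1 := Finset.card_insert_le (fv0 u) ((Sv.image fv0) ∪ (Sv.image (fun z => fe0 s(v, z))))
    have h2 := Finset.card_union_le (Sv.image fv0) (Sv.image (fun z => fe0 s(v, z)))
    have h3 : (Sv.image fv0).card ≤ τ - 1 := Finset.card_image_le.trans hSvcard.le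
    have h4 : (Sv.image (fun z => fe0 s(v, z))).card ≤ τ - 1 :=
      Finset.card_image_le.trans hSvcard.le
    rw [hT0] at *
    omega
  obtain ⟨c0, hc0⟩ : ∃ c, c ∉ T0 := by
    by_contra hcon
    push_neg at hcon
    rw [Finset.eq_univ_iff_forall.mpr hcon, Finset.card_univ, Fintype.card_fin] at hT0card
    omega
  have hcol1 : IsTotalColoring (G.deleteEdges {s(u, v)}) (Function.update fv0 v c0) fe0 := by
    refine recolor_vertex hcol0 v c0 ?_ ?_
    · intro b hb
      rw [hadjv] at hb
      intro h
      refine hc0 (by rw [h, hT0]; exact Finset.mem_insert_of_mem (Finset.mem_union_left _ (Finset.mem_image_of_mem _ ((hSvmem b).mpr hb))))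
    · intro e he hve
      obtain ⟨z, hz, rfl⟩ := edge_decomp he hve
      rw [hadjv] at hz
      intro h
      refine hc0 (by rw [h, hT0]; exact Finset.mem_insert_of_mem (Finset.mem_union_right _ (Finset.mem_image_of_mem _ ((hSvmem z).mpr hz))))
  set fv1 := Function.update fv0 v c0 with hfv1
  have huvne1 : fv1 u ≠ fv1 v := by
    rw [hfv1, Function.update_self, Function.update_of_ne huvne']
    exact fun h => hc0 (by rw [← h, hT0]; exact Finset.mem_insert_self _ _)
  -- the sets of colors around u and v
  set Fu := Su.image (fun z => fe0 s(u, z)) with hFu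
  set Fv := Sv.image (fun z => fe0 s(v, z)) with hFv
  have hFucard : Fu.card ≤ τ - 1 := Finset.card_image_le.trans hSucard.le
  have hFvcard : Fv.card ≤ τ - 1 := Finset.card_image_le.trans hSvcard.le
  set F := insert (fv1 u) (insert (fv1 v) (Fu ∪ Fv)) with hF
  by_cases hFall : ∀ c, c ∈ F
  · -- F is everything: counting forces the key non-membership facts
    have hFcard : F.card = 2 * τ := by
      rw [Finset.eq_univ_iff_forall.mpr hFall, Finset.card_univ, Fintype.card_fin]
    have hcard3 : (Fu ∪ Fv).card ≤ Fu.card + Fv.card := Finset.card_union_le _ _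
    have hmemu : fv1 u ∉ insert (fv1 v) (Fu ∪ Fv) := by
      intro hmem
      have hcard2 : F.card ≤ (Fu ∪ Fv).card + 1 := by
        rw [hF, Finset.insert_eq_self.mpr hmem]
        exact Finset.card_insert_le _ _
      omega
    have hmemv : fv1 v ∉ Fu ∪ Fv := by
      intro hmem
      have hcard2 : F.card ≤ (Fu ∪ Fv).card + 1 := by
        calc F.card = (insert (fv1 u) (Fu ∪ Fv)).card := by
              rw [hF, Finset.insert_eq_self.mpr hmem]
          _ ≤ (Fu ∪ Fv).card + 1 := Finset.card_insert_le _ _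
      omega
    have hfu_notin : fv1 u ∉ Fu ∪ Fv := fun h => hmemu (Finset.mem_insert_of_mem h)
    have hwF : fv1 w ∈ F := by rw [Finset.eq_univ_iff_forall.mpr hFall]; exact Finset.mem_univ _
    have hneq_u : fv1 w ≠ fv1 u := (hcol1.1 u w ((hadju w).mpr ⟨huw, hwv⟩)).symm
    have hneq_v : fv1 w ≠ fv1 v := (hcol1.1 v w ((hadjv w).mpr ⟨hvw, hwu⟩)).symm
    have hwFuFv : fv1 w ∈ Fu ∪ Fv := by
      rw [hF] at hwF
      rcases Finset.mem_insert.mp hwF with h | h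
      · exact absurd h hneq_u
      rcases Finset.mem_insert.mp h with h | h
      · exact absurd h hneq_v
      · exact h
    rcases Finset.mem_union.mp hwFuFv with hcase | hcase
    · -- fv1 w is the color of an edge ux, x ≠ v
      obtain ⟨z, hz, hfz⟩ := Finset.mem_image.mp hcase
      rw [hSumem] at hz
      have hfu_u : ∀ x', G.Adj u x' → x' ≠ v → fv1 u ≠ fe0 s(u, x') := by
        intro x' ha hb h
        exact hfu_notin (by rw [h]; exact Finset.mem_union_left _ (Finset.mem_image_of_mem _ ((hSumem x').mpr ⟨ha, hb⟩)))
      have hfu_v : ∀ y', G.Adj v y' → y' ≠ u → fv1 u ≠ fe0 s(v, y') := by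
        intro y' ha hb h
        exact hfu_notin (by rw [h]; exact Finset.mem_union_right _ (Finset.mem_image_of_mem _ ((hSvmem y').mpr ⟨ha, hb⟩)))
      obtain ⟨fv', fe', hcol'⟩ :=
        core_lemma huv hu huw hwv hcol1 huvne1 z hz.1 hz.2 hfz.symm hfu_u hfu_v
      exact hfinal fv' fe' hcol'
    · -- fv1 w is the color of an edge vy, y ≠ u : symmetric case
      obtain ⟨z, hz, hfz⟩ := Finset.mem_image.mp hcase
      rw [hSvmem] at hz
      have hcolswap : IsTotalColoring (G.deleteEdges {s(v, u)}) fv1 fe0 := by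
        rw [show ({s(v, u)} : Set (Sym2 V)) = {s(u, v)} from by rw [Sym2.eq_swap]]
        exact hcol1
      have hfv_u : ∀ x', G.Adj v x' → x' ≠ u → fv1 v ≠ fe0 s(v, x') := by
        intro x' ha hb h
        exact hmemv (by rw [h]; exact Finset.mem_union_right _ (Finset.mem_image_of_mem _ ((hSvmem x').mpr ⟨ha, hb⟩)))
      have hfv_v : ∀ y', G.Adj u y' → y' ≠ v → fv1 v ≠ fe0 s(u, y') := by
        intro y' ha hb h
        exact hmemv (by rw [h]; exact Finset.mem_union_left _ (Finset.mem_image_of_mem _ ((hSumem y').mpr ⟨ha, hb⟩)))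
      obtain ⟨fv', fe', hcol'⟩ :=
        core_lemma huv.symm hv hvw hwu hcolswap huvne1.symm z hz.1 hz.2 hfz.symm hfv_u hfv_v
      exact hfinal fv' fe' hcol'
  · -- some color is unused around uv: extend directly
    push_neg at hFall
    obtain ⟨c, hc⟩ := hFall
    refine hfinal fv1 (Function.update fe0 s(u, v) c)
      (extend_coloring huv hcol1 c ?_ ?_ huvne1 ?_ ?_)
    · exact fun h => hc (by rw [h, hF]; exact Finset.mem_insert_self _ _)
    · exact fun h => hc (by rw [h, hF]; exact Finset.mem_insert_of_mem (Finset.mem_insert_self _ _))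
    · intro x' ha hb h
      exact hc (by rw [h, hF]; exact Finset.mem_insert_of_mem (Finset.mem_insert_of_mem (Finset.mem_union_left _ (Finset.mem_image_of_mem _ ((hSumem x').mpr ⟨ha, hb⟩)))))
    · intro y' ha hb h
      exact hc (by rw [h, hF]; exact Finset.mem_insert_of_mem (Finset.mem_insert_of_mem (Finset.mem_union_right _ (Finset.mem_image_of_mem _ ((hSvmem y').mpr ⟨ha, hb⟩)))))
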